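/- Let n ≥ 2, a > 0, and α = (α_1,…,α_n) ∈ (0,∞)^n with a α_k < 1 for all k; set β_k := (1 − a α_k)/α_k. Let μ ∈ ℝ^n and let Σ ∈ ℝ^{n×n} be a diagonal matrix with nonnegative diagonal entries Σ_{kk}. For θ ∈ ℝ^n put z_k := i μ_k θ_k − ½ θ_k² Σ_{kk}. Then ∫_{(0,∞)^{n+1}} exp(Σ_{k=1}^n z_k (α_k s_0 + s_k)) γ_0(ds_0) γ_1(ds_1) ⋯ γ_n(ds_n) = exp(−a Log(1 − i⟨α⋄μ, θ⟩ + ½‖θ‖²_{α⋄Σ}) − Σ_{k=1}^n β_k Log(1 − i α_k μ_k θ_k + ½ α_k θ_k² Σ_{kk})), where γ_0 is the Gamma distribution with shape a and rate 1, and γ_k is the Gamma distribution with shape β_k and rate 1/α_k for 1 ≤ k ≤ n. -/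

import Mathlib

open MeasureTheory Complex

noncomputable section

/-- Euclidean inner product on `ℝ^n`. -/
def dot {n : ℕ} (x y : Fin n → ℝ) : ℝ := ∑ k, x k * y k

/-- Quadratic form `‖θ‖²_A = θ A θᵀ`. -/
def quad {n : ℕ} (A : Matrix (Fin n) (Fin n) ℝ) (θ : Fin n → ℝ) : ℝ :=
  ∑ k, ∑ l, θ k * A k l * θ l

/-- Outer product `t ⋄ μ` of vectors, `(t ⋄ μ)_k = t_k μ_k`. -/
def diaV {n : ℕ} (t μ : Fin n → ℝ) : Fin n → ℝ := fun k => t k * μ k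

/-- Outer product `t ⋄ Σ`, `(t ⋄ Σ)_{kl} = Σ_{kl} min(t_k, t_l)`. -/
def diaM {n : ℕ} (t : Fin n → ℝ) (A : Matrix (Fin n) (Fin n) ℝ) :
    Matrix (Fin n) (Fin n) ℝ := Matrix.of fun k l => A k l * min (t k) (t l)

/-- Lévy exponent of the weak variance-alpha-gamma process `WVAG^n(a, α, μ, Σ)`:
`Ψ(θ) = -a Log(1 - i⟨α⋄μ,θ⟩ + ½‖θ‖²_{α⋄Σ}) - ∑ₖ βₖ Log(1 - i αₖ μₖ θₖ + ½ αₖ θₖ² Σₖₖ)`,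
where `βₖ = (1 - a αₖ)/αₖ`. -/
def Ψwvag {n : ℕ} (a : ℝ) (α μ : Fin n → ℝ) (S : Matrix (Fin n) (Fin n) ℝ)
    (θ : Fin n → ℝ) : ℂ :=
  -(a : ℂ) * Complex.log (1 - Complex.I * (dot (diaV α μ) θ : ℂ) +
      (quad (diaM α S) θ : ℂ) / 2) -
    ∑ k, (((1 - a * α k) / α k : ℝ) : ℂ) *
      Complex.log (1 - Complex.I * ((α k * μ k * θ k : ℝ) : ℂ) +
        ((α k * θ k ^ 2 * S k k : ℝ) : ℂ) / 2)

open Set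
open scoped NNReal ENNReal

lemma int_rpow_exp {s b : ℝ} (hs : -1 < s) (hb : 0 < b) :
    IntegrableOn (fun x : ℝ => x ^ s * Real.exp (-(b * x))) (Set.Ioi 0) := by
  refine (integrableOn_rpow_mul_exp_neg_mul_rpow hs one_pos hb).congr_fun
    (fun x hx => ?_) measurableSet_Ioi
  simp only [Real.rpow_one, neg_mul]

lemma gammaIntegral_cpow {p : ℝ} (hp : 0 < p) {w : ℂ} (hw : 0 < w.re) :
    ∫ t in Set.Ioi (0:ℝ), (t : ℂ) ^ ((p : ℂ) - 1) * Complex.exp (-(w * t)) =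
      Complex.Gamma p * w ^ (-(p : ℂ)) := by
  set U : Set ℂ := {w : ℂ | 0 < w.re} with hU
  have hUopen : IsOpen U := isOpen_lt continuous_const Complex.continuous_re
  have hUconn : IsPreconnected U := (convex_halfSpace_re_gt 0).isPreconnected
  set f : ℂ → ℂ := fun w => ∫ t in Set.Ioi (0:ℝ), (t : ℂ) ^ ((p : ℂ) - 1) *
    Complex.exp (-(w * t)) with hfdef
  set g : ℂ → ℂ := fun w => Complex.Gamma p * w ^ (-(p : ℂ)) with hgdef
  have meas : ∀ w : ℂ, AEStronglyMeasurable
      (fun t : ℝ => (t : ℂ) ^ ((p : ℂ) - 1) * Complex.exp (-(w * t)))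
      (volume.restrict (Set.Ioi (0:ℝ))) := by
    intro w
    refine ContinuousOn.aestronglyMeasurable ?_ measurableSet_Ioi
    refine ContinuousOn.mul (ContinuousOn.cpow_const ?_ ?_) ?_
    · exact Complex.continuous_ofReal.continuousOn
    · intro t ht; exact Or.inl (by simpa using ht)
    · exact (Complex.continuous_exp.comp (by continuity)).continuousOn
  have normF : ∀ (w : ℂ) (t : ℝ), t ∈ Set.Ioi (0:ℝ) →
      ‖(t : ℂ) ^ ((p : ℂ) - 1) * Complex.exp (-(w * t))‖
        = t ^ (p - 1) * Real.exp (-(w.re * t)) := by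
    intro w t ht
    rw [norm_mul,
      Complex.norm_cpow_eq_rpow_re_of_pos ht, Complex.norm_exp]
    rw [show ((p:ℂ) - 1).re = p - 1 by simp, show (-(w * (t:ℝ))).re = -(w.re * t) by
      simp [Complex.mul_re]]
  -- analyticity of g
  have hga : AnalyticOnNhd ℂ g U := by
    apply DifferentiableOn.analyticOnNhd _ hUopen
    intro w hw
    exact ((differentiableAt_id.cpow (differentiableAt_const _)
      (Or.inl hw)).const_mul _).differentiableWithinAt
  -- analyticity of f
  have hfa : AnalyticOnNhd ℂ f U := by
    apply DifferentiableOn.analyticOnNhd _ hUopen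
    intro w₀ hw₀
    have hw₀' : (0:ℝ) < w₀.re := hw₀
    have hε : (0:ℝ) < w₀.re / 2 := half_pos hw₀'
    have key := hasDerivAt_integral_of_dominated_loc_of_deriv_le
      (μ := volume.restrict (Set.Ioi (0:ℝ)))
      (F := fun w t => (t : ℂ) ^ ((p : ℂ) - 1) * Complex.exp (-(w * t)))
      (F' := fun w t => (t : ℂ) ^ ((p : ℂ) - 1) * (Complex.exp (-(w * t)) * (-(t:ℂ))))
      (bound := fun t => t ^ p * Real.exp (-(w₀.re / 2 * t)))
      (x₀ := w₀) (Metric.ball_mem_nhds w₀ hε)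
      (Filter.Eventually.of_forall meas)
      ?_ ?_ ?_ ?_ ?_
    · exact (key.2.differentiableAt).differentiableWithinAt
    · -- Integrable (F w₀)
      refine Integrable.mono' (int_rpow_exp (s := p - 1) (b := w₀.re) (by linarith) hw₀')
        (meas w₀) ?_
      filter_upwards [ae_restrict_mem measurableSet_Ioi] with t ht
      exact le_of_eq (normF w₀ t ht)
    · -- AESM F'
      refine ContinuousOn.aestronglyMeasurable ?_ measurableSet_Ioi
      refine ContinuousOn.mul (ContinuousOn.cpow_const ?_ ?_) ?_
      · exact Complex.continuous_ofReal.continuousOn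
      · intro t ht; exact Or.inl (by simpa using ht)
      · exact ((Complex.continuous_exp.comp (by continuity)).mul (by continuity)).continuousOn
    · -- bound
      filter_upwards [ae_restrict_mem measurableSet_Ioi] with t ht
      intro w hwball
      have htpos : (0:ℝ) < t := ht
      have hre : w₀.re / 2 ≤ w.re := by
        have h1 : |w.re - w₀.re| ≤ ‖w - w₀‖ := by
          simpa using Complex.abs_re_le_norm (w - w₀)
        have h2 : ‖w - w₀‖ < w₀.re / 2 := by
          simpa [Complex.dist_eq] using Metric.mem_ball.mp hwball
        have := abs_sub_abs_le_abs_sub (w.re) (w₀.re)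
        have h3 : w₀.re - w.re ≤ |w.re - w₀.re| := by
          rw [abs_sub_comm]; exact le_abs_self _
        linarith
      have hnorm : ‖(t : ℂ) ^ ((p : ℂ) - 1) * (Complex.exp (-(w * t)) * (-(t:ℂ)))‖
          = t ^ (p - 1) * (Real.exp (-(w.re * t)) * t) := by
        rw [norm_mul, norm_mul, norm_neg,
          Complex.norm_cpow_eq_rpow_re_of_pos htpos, Complex.norm_exp,
          Complex.norm_real, Real.norm_eq_abs, abs_of_pos htpos,
          show ((p:ℂ) - 1).re = p - 1 by simp,
          show (-(w * (t:ℝ))).re = -(w.re * t) by simp [Complex.mul_re]]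
      rw [hnorm]
      have h7 : t ^ (p - 1) * (Real.exp (-(w.re * t)) * t)
          = t ^ p * Real.exp (-(w.re * t)) := by
        rw [show t ^ p = t ^ (p - 1) * t by
          rw [← Real.rpow_add_one htpos.ne' (p - 1), sub_add_cancel]]
        ring
      rw [h7]
      have h8 : Real.exp (-(w.re * t)) ≤ Real.exp (-(w₀.re / 2 * t)) := by
        apply Real.exp_le_exp.mpr
        nlinarith
      have h9 : (0:ℝ) ≤ t ^ p := (Real.rpow_pos_of_pos htpos p).le
      nlinarith [Real.rpow_pos_of_pos htpos p]
    · exact int_rpow_exp (s := p) (b := w₀.re/2) (by linarith) hε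
    · -- h_diff
      filter_upwards [ae_restrict_mem measurableSet_Ioi] with t ht
      intro w hwball
      have inner : HasDerivAt (fun w : ℂ => -(w * (t:ℂ))) (-(t:ℂ)) w :=
        (hasDerivAt_mul_const (t:ℂ)).neg
      exact (inner.cexp).const_mul _
  -- equality on positive reals
  have hreal : ∀ r : ℝ, 0 < r → f r = g r := by
    intro r hr
    have h1 := integral_cpow_mul_exp_neg_mul_Ioi
      (a := (p:ℂ)) (by simpa using hp) hr
    rw [hfdef, hgdef]
    simp only []
    rw [h1, one_div, Complex.inv_cpow _ _ (by
      rw [Complex.arg_ofReal_of_nonneg hr.le]; exact Ne.symm Real.pi_ne_zero),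
      ← Complex.cpow_neg, mul_comm]
  -- identity theorem
  have hfreq : ∃ᶠ z in nhdsWithin (2:ℂ) {(2:ℂ)}ᶜ, f z = g z := by
    rw [Filter.frequently_iff]
    intro s hs
    rw [Metric.mem_nhdsWithin_iff] at hs
    obtain ⟨ε, hε, hsub⟩ := hs
    have hm : (0:ℝ) < min ε 1 / 2 := by positivity
    refine ⟨((2 + min ε 1 / 2 : ℝ) : ℂ), hsub ⟨?_, ?_⟩, hreal _ (by positivity)⟩
    · rw [Metric.mem_ball, Complex.dist_eq]
      have : ((2 + min ε 1 / 2 : ℝ) : ℂ) - 2 = ((min ε 1 / 2 : ℝ) : ℂ) := by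
        push_cast; ring
      rw [this, Complex.norm_real, Real.norm_eq_abs, abs_of_pos hm]
      calc min ε 1 / 2 ≤ ε / 2 := by gcongr; exact min_le_left _ _
        _ < ε := by linarith
    · simp only [Set.mem_compl_iff, Set.mem_singleton_iff]
      intro hcontra
      have : (2 + min ε 1 / 2 : ℝ) = 2 := by
        exact_mod_cast hcontra
      linarith
  have h2U : (2:ℂ) ∈ U := by simp [hU]
  have := hfa.eqOn_of_preconnected_of_frequently_eq hga hUconn h2U hfreq
  exact this hw

lemma gamma_mix {p r : ℝ} (hp : 0 < p) (hr : 0 < r) {z : ℂ} (hz : z.re ≤ 0) :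
    ∫ x : ℝ, Complex.exp (z * x) ∂(ProbabilityTheory.gammaMeasure p r)
      = Complex.exp (-(p : ℂ) * Complex.log (1 - z / r)) := by
  have hwre : 0 < ((r : ℂ) - z).re := by
    simp only [Complex.sub_re, Complex.ofReal_re]; linarith
  have hwne : (r : ℂ) - z ≠ 0 := by
    intro h
    rw [h] at hwre; simp at hwre
  -- step 1: withDensity
  rw [ProbabilityTheory.gammaMeasure,
    show ProbabilityTheory.gammaPDF p r
      = fun x => ((Real.toNNReal (ProbabilityTheory.gammaPDFReal p r x) : ℝ≥0) : ℝ≥0∞) from rfl,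
    integral_withDensity_eq_integral_smul
      ((ProbabilityTheory.measurable_gammaPDFReal p r).real_toNNReal) _]
  -- step 2: restrict to Ioi 0
  rw [← setIntegral_eq_integral_of_forall_compl_eq_zero (s := Set.Ici (0:ℝ)) (fun x hx => by
    have hx' : x < 0 := by simpa using hx
    simp [ProbabilityTheory.gammaPDFReal, not_le.mpr hx']),
    integral_Ici_eq_integral_Ioi]
  -- step 3: pointwise form on Ioi 0
  have hcong : ∀ x ∈ Set.Ioi (0:ℝ),
      (Real.toNNReal (ProbabilityTheory.gammaPDFReal p r x)) • Complex.exp (z * x)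
        = ((r ^ p / Real.Gamma p : ℝ) : ℂ) *
            ((x : ℂ) ^ ((p : ℂ) - 1) * Complex.exp (-(((r : ℂ) - z) * x))) := by
    intro x hx
    have hx' : (0:ℝ) < x := hx
    have hpdf : ProbabilityTheory.gammaPDFReal p r x
        = r ^ p / Real.Gamma p * x ^ (p - 1) * Real.exp (-(r * x)) := by
      rw [ProbabilityTheory.gammaPDFReal, if_pos hx'.le]
    rw [NNReal.smul_def, Real.coe_toNNReal _ (by rw [hpdf]; positivity), hpdf,
      Complex.real_smul,
      show -(((r : ℂ) - z) * x) = ((-(r * x) : ℝ) : ℂ) + z * x by push_cast; ring,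
      Complex.exp_add, ← Complex.ofReal_exp,
      show ((x:ℂ)) ^ ((p:ℂ) - 1) = ((x ^ (p - 1) : ℝ) : ℂ) by
        rw [Complex.ofReal_cpow hx'.le]; norm_cast]
    push_cast
    ring
  rw [setIntegral_congr_fun measurableSet_Ioi hcong, integral_const_mul,
    gammaIntegral_cpow hp hwre]
  -- step 4: algebra
  have hΓ : (Real.Gamma p : ℂ) ≠ 0 := by
    exact_mod_cast (Real.Gamma_pos_of_pos hp).ne'
  rw [Complex.Gamma_ofReal]
  rw [show ((r ^ p / Real.Gamma p : ℝ) : ℂ) = ((r:ℂ) ^ (p:ℂ)) / (Real.Gamma p : ℂ) by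
    push_cast [← Complex.ofReal_cpow hr.le]; ring]
  have h1 : (1 : ℂ) - z / r = ((r⁻¹ : ℝ) : ℂ) * ((r:ℂ) - z) := by
    push_cast
    rw [mul_sub, inv_mul_cancel₀ (Complex.ofReal_ne_zero.mpr hr.ne'), div_eq_mul_inv]
    ring
  have hrhs : Complex.exp (-(p : ℂ) * Complex.log (1 - z / r))
      = ((r:ℂ) ^ (p:ℂ)) * (((r:ℂ) - z) ^ (-(p:ℂ))) := by
    rw [h1, Complex.log_ofReal_mul (inv_pos.mpr hr) hwne,
      Complex.cpow_def_of_ne_zero (Complex.ofReal_ne_zero.mpr hr.ne'),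
      Complex.cpow_def_of_ne_zero hwne,
      ← Complex.exp_add, ← Complex.ofReal_log hr.le, Real.log_inv]
    push_cast
    ring_nf
  rw [hrhs]
  field_simp

lemma pi_integral_prod {n : ℕ} (μ : Fin n → Measure ℝ) [∀ i, SigmaFinite (μ i)]
    (f : Fin n → ℝ → ℂ) :
    ∫ x : Fin n → ℝ, ∏ i, f i (x i) ∂(Measure.pi μ) = ∏ i, ∫ x, f i x ∂(μ i) := by
  induction n with
  | zero =>
      simp only [Finset.univ_eq_empty, Finset.prod_empty, integral_const,
        Measure.pi_empty_univ, Measure.real, ENNReal.toReal_one, one_smul]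
  | succ n ih =>
      calc
        ∫ x : Fin (n+1) → ℝ, ∏ i, f i (x i) ∂(Measure.pi μ)
            = ∫ x : ℝ × (Fin n → ℝ), f 0 x.1 * ∏ i : Fin n, f i.succ (x.2 i)
              ∂((μ 0).prod (Measure.pi fun i => μ i.succ)) := by
          rw [← ((measurePreserving_piFinSuccAbove μ 0).symm).integral_comp']
          simp_rw [MeasurableEquiv.piFinSuccAbove_symm_apply, Fin.insertNthEquiv,
            Fin.prod_univ_succ, Fin.insertNth_zero, Equiv.coe_fn_mk, Fin.cons_succ,
            Fin.zero_succAbove, cast_eq, Fin.cons_zero]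
        _ = (∫ x, f 0 x ∂(μ 0)) * ∏ i : Fin n, ∫ x, f i.succ x ∂(μ i.succ) := by
          rw [← ih, ← integral_prod_mul]
        _ = ∏ i, ∫ x, f i x ∂(μ i) := by rw [Fin.prod_univ_succ]

/-- For diagonal `Σ`, the characteristic function at time 1 of the strong subordination
`B ∘ T` of `B ~ BM^n(μ,Σ)` (independent components) by the alpha-gamma subordinator
`T = G₀α + (G₁,…,Gₙ)` equals the characteristic function of `WVAG^n(a,α,μ,Σ)`:
mixing `exp(∑ₖ zₖ(αₖ s₀ + sₖ))`, `zₖ = iμₖθₖ - ½θₖ²Σₖₖ`, over independent Gamma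
distributions `γ₀ = Γ(a,1)`, `γₖ = Γ(βₖ, 1/αₖ)` yields `exp(Ψ_{WVAG}(θ))`. -/
theorem stmt13 {n : ℕ} (hn : 2 ≤ n) (a : ℝ) (ha : 0 < a) (α : Fin n → ℝ)
    (hα : ∀ k, 0 < α k) (hsmall : ∀ k, a * α k < 1) (μ : Fin n → ℝ)
    (S : Matrix (Fin n) (Fin n) ℝ) (hdiag : ∀ k l, k ≠ l → S k l = 0)
    (hnn : ∀ k, 0 ≤ S k k) (θ : Fin n → ℝ) :
    ∫ s : Fin (n + 1) → ℝ,
        Complex.exp (∑ k : Fin n,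
          (Complex.I * ((μ k * θ k : ℝ) : ℂ) - ((θ k ^ 2 * S k k : ℝ) : ℂ) / 2) *
            ((α k * s 0 + s k.succ : ℝ) : ℂ))
      ∂(Measure.pi (fun i : Fin (n + 1) =>
          Fin.cases (ProbabilityTheory.gammaMeasure a 1)
            (fun k => ProbabilityTheory.gammaMeasure ((1 - a * α k) / α k) (1 / α k)) i)) =
      Complex.exp (Ψwvag a α μ S θ) := by
  have hβ : ∀ k, 0 < (1 - a * α k) / α k :=
    fun k => div_pos (by linarith [hsmall k]) (hα k)
  set z : Fin n → ℂ := fun k =>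
    Complex.I * ((μ k * θ k : ℝ) : ℂ) - ((θ k ^ 2 * S k k : ℝ) : ℂ) / 2 with hzdef
  have hzre : ∀ k, (z k).re = -(θ k ^ 2 * S k k) / 2 := by
    intro k
    simp [hzdef, Complex.div_re, ← Complex.ofReal_pow]
    ring
  set ν : Fin (n + 1) → Measure ℝ := fun i =>
    Fin.cases (ProbabilityTheory.gammaMeasure a 1)
      (fun k => ProbabilityTheory.gammaMeasure ((1 - a * α k) / α k) (1 / α k)) i with hνdef
  haveI hprob : ∀ i, IsProbabilityMeasure (ν i) := by
    intro i
    induction i using Fin.cases with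
    | zero => exact ProbabilityTheory.isProbabilityMeasure_gammaMeasure ha one_pos
    | succ k =>
        simp only [hνdef, Fin.cases_succ]
        exact ProbabilityTheory.isProbabilityMeasure_gammaMeasure (hβ k) (one_div_pos.mpr (hα k))
  haveI : ∀ i, SigmaFinite (ν i) := fun i => inferInstance
  set g : Fin (n + 1) → ℝ → ℂ :=
    Fin.cases (fun x => Complex.exp ((∑ k, z k * ((α k : ℝ) : ℂ)) * x))
      (fun k x => Complex.exp (z k * x)) with hgdef
  have hA : ∀ s : Fin (n + 1) → ℝ,
      Complex.exp (∑ k : Fin n, z k * ((α k * s 0 + s k.succ : ℝ) : ℂ))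
        = ∏ i, g i (s i) := by
    intro s
    rw [Fin.prod_univ_succ]
    simp only [hgdef, Fin.cases_zero, Fin.cases_succ]
    rw [← Complex.exp_sum, ← Complex.exp_add]
    congr 1
    push_cast
    rw [Finset.sum_mul, ← Finset.sum_add_distrib]
    refine Finset.sum_congr rfl (fun k _ => ?_)
    ring
  calc
    ∫ s : Fin (n + 1) → ℝ,
        Complex.exp (∑ k : Fin n, z k * ((α k * s 0 + s k.succ : ℝ) : ℂ)) ∂(Measure.pi ν)
      = ∫ s : Fin (n + 1) → ℝ, ∏ i, g i (s i) ∂(Measure.pi ν) := by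
        refine integral_congr_ae (Filter.Eventually.of_forall (fun s => ?_))
        exact hA s
    _ = ∏ i, ∫ x, g i x ∂(ν i) := pi_integral_prod ν g
    _ = (∫ x, Complex.exp ((∑ k, z k * ((α k : ℝ) : ℂ)) * x)
          ∂(ProbabilityTheory.gammaMeasure a 1)) *
        ∏ k : Fin n, ∫ x, Complex.exp (z k * x)
          ∂(ProbabilityTheory.gammaMeasure ((1 - a * α k) / α k) (1 / α k)) := by
        rw [Fin.prod_univ_succ]
        simp only [hgdef, hνdef, Fin.cases_zero, Fin.cases_succ]
    _ = Complex.exp (Ψwvag a α μ S θ) := by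
        have h0 : (∑ k, z k * ((α k : ℝ) : ℂ)).re ≤ 0 := by
          rw [Complex.re_sum]
          refine Finset.sum_nonpos (fun k _ => ?_)
          have : (z k * ((α k : ℝ) : ℂ)).re = (z k).re * α k := by
            simp [Complex.mul_re]
          rw [this, hzre k]
          have := hnn k
          have := (hα k).le
          have h2 : (0:ℝ) ≤ θ k ^ 2 * S k k := mul_nonneg (sq_nonneg _) (hnn k)
          nlinarith
        have hzk : ∀ k, (z k).re ≤ 0 := by
          intro k
          rw [hzre k]
          have : (0:ℝ) ≤ θ k ^ 2 * S k k := mul_nonneg (sq_nonneg _) (hnn k)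
          linarith
        rw [gamma_mix ha one_pos h0]
        have hfac : ∀ k : Fin n,
            (∫ x, Complex.exp (z k * x)
              ∂(ProbabilityTheory.gammaMeasure ((1 - a * α k) / α k) (1 / α k)))
            = Complex.exp (-(((1 - a * α k) / α k : ℝ) : ℂ) *
                Complex.log (1 - Complex.I * ((α k * μ k * θ k : ℝ) : ℂ) +
                  ((α k * θ k ^ 2 * S k k : ℝ) : ℂ) / 2)) := by
          intro k
          rw [gamma_mix (hβ k) (one_div_pos.mpr (hα k)) (hzk k)]
          congr 2
          rw [show ((1 / α k : ℝ) : ℂ) = 1 / ((α k : ℝ) : ℂ) by push_cast; ring,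
            div_div_eq_mul_div, div_one]
          simp only [hzdef]
          push_cast
          ring
        simp only [hfac]
        rw [← Complex.exp_sum, ← Complex.exp_add]
        congr 1
        have key : (1 : ℂ) - (∑ k, z k * ((α k : ℝ) : ℂ)) / ((1:ℝ) : ℂ)
            = 1 - Complex.I * ((dot (diaV α μ) θ : ℝ) : ℂ)
              + ((quad (diaM α S) θ : ℝ) : ℂ) / 2 := by
          have h1 : dot (diaV α μ) θ = ∑ k, α k * μ k * θ k := by
            unfold dot diaV
            exact Finset.sum_congr rfl (fun k _ => by ring)
          have h2 : quad (diaM α S) θ = ∑ k, α k * (θ k ^ 2 * S k k) := by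
            unfold quad diaM
            refine Finset.sum_congr rfl (fun k _ => ?_)
            rw [Finset.sum_eq_single k]
            · simp only [Matrix.of_apply, min_self]
              ring
            · intro l _ hlk
              rw [Matrix.of_apply, hdiag k l (fun h => hlk h.symm)]
              ring
            · intro h
              exact absurd (Finset.mem_univ k) h
          rw [h1, h2]
          have h3 : (∑ k, z k * ((α k : ℝ) : ℂ))
              = Complex.I * ((∑ k, α k * μ k * θ k : ℝ) : ℂ)
                - ((∑ k, α k * (θ k ^ 2 * S k k) : ℝ) : ℂ) / 2 := by
            push_cast
            rw [Finset.mul_sum, Finset.sum_div, ← Finset.sum_sub_distrib]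
            refine Finset.sum_congr rfl (fun k _ => ?_)
            simp only [hzdef]
            push_cast
            ring
          rw [h3]
          push_cast
          ring
        rw [key, Ψwvag]
        simp only [neg_mul, sub_eq_add_neg, Finset.sum_neg_distrib]
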